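/- Suppose there exist λ ∈ ℤ with |λ| > 1 and a nontrivial a ∈ A with φ(a) = λ·a (writing A additively). Then ⟨λ·a⟩ is not separable from a in G: for every finite-index normal subgroup Ḡ of G one has a ∈ ⟨λ·a⟩·Ḡ. In particular, G is not cyclic subgroup separable. -/

import Mathlib

open Subgroup Pointwise

/-- The free abelian group of rank `n`, written multiplicatively. -/
abbrev FreeAb (n : ℕ) : Type := Multiplicative (Fin n → ℤ)

/-- The isomorphism from `A = ⊤` onto the image `φ(A)` induced by an injective
endomorphism `φ` of the free abelian group `A`. -/
noncomputable def ascIso {n : ℕ} (φ : FreeAb n →* FreeAb n) (hφ : Function.Injective φ) :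
    (⊤ : Subgroup (FreeAb n)) ≃* φ.range :=
  Subgroup.topEquiv.trans (MonoidHom.ofInjective hφ)

/-- The ascending HNN extension `G = A∗_φ = ⟨A, t ∣ t·a·t⁻¹ = φ(a) for a ∈ A⟩`,
realized as the HNN extension of `A` over the subgroups `⊤` and `φ.range`. -/
abbrev AscHNN {n : ℕ} (φ : FreeAb n →* FreeAb n) (hφ : Function.Injective φ) : Type :=
  HNNExtension (FreeAb n) ⊤ φ.range (ascIso φ hφ)

/-- Iterated conjugation: if `T x T⁻¹ = x ^ lam` then `T^j x T^{-j} = x ^ (lam ^ j)`. -/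
lemma conj_pow_iter {Q : Type*} [Group Q] {T x : Q} {lam : ℤ}
    (h : T * x * T⁻¹ = x ^ lam) : ∀ j : ℕ, T ^ j * x * (T ^ j)⁻¹ = x ^ (lam ^ j) := by
  intro j
  induction j with
  | zero => simp
  | succ j ih =>
    have h1 : T ^ (j + 1) * x * (T ^ (j + 1))⁻¹ = T * (T ^ j * x * (T ^ j)⁻¹) * T⁻¹ := by
      group
    rw [h1, ih, ← conj_zpow, h, ← zpow_mul, pow_succ, mul_comm]

/-- If `φ` has an integer eigenvalue `λ` with `|λ| > 1` and
eigenvector `a ≠ 1` (i.e. `φ(a) = a^λ` multiplicatively), then `⟨λ·a⟩ = ⟨a^λ⟩` is not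
separable from `a` in `G = A∗_φ`: `a ∈ ⟨a^λ⟩·Gbar` for every finite-index normal
subgroup `Gbar` of `G`.  In particular, `G` is not cyclic subgroup separable. -/
theorem stmt_11 (n : ℕ) (hn : 1 ≤ n)
    (φ : FreeAb n →* FreeAb n) (hφ : Function.Injective φ)
    (lam : ℤ) (hlam : 1 < |lam|) (a : FreeAb n) (ha : a ≠ 1)
    (heig : φ a = a ^ lam) :
    (∀ Gbar : Subgroup (AscHNN φ hφ), Gbar.Normal → Gbar.FiniteIndex →
      (HNNExtension.of a : AscHNN φ hφ) ∈
        ((Subgroup.zpowers (HNNExtension.of (a ^ lam) : AscHNN φ hφ) :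
            Set (AscHNN φ hφ)) * (Gbar : Set (AscHNN φ hφ)))) ∧
    ¬ (∀ g h : AscHNN φ hφ, h ∉ Subgroup.zpowers g →
        ∃ N : Subgroup (AscHNN φ hφ), N.Normal ∧ N.FiniteIndex ∧
          h ∉ ((Subgroup.zpowers g : Set (AscHNN φ hφ)) * (N : Set (AscHNN φ hφ)))) := by
  -- The key relation : t * (of a) * t⁻¹ = (of a) ^ lam in G.
  have hrel : HNNExtension.t * (HNNExtension.of a : AscHNN φ hφ) * HNNExtension.t⁻¹
      = (HNNExtension.of a : AscHNN φ hφ) ^ lam := by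
    have h1 := HNNExtension.equiv_eq_conj (φ := ascIso φ hφ) ⟨a, trivial⟩
    have h2 : ((ascIso φ hφ ⟨a, trivial⟩ : φ.range) : FreeAb n) = φ a := rfl
    rw [h2, heig, map_zpow] at h1
    exact h1.symm
  have part1 : ∀ Gbar : Subgroup (AscHNN φ hφ), Gbar.Normal → Gbar.FiniteIndex →
      (HNNExtension.of a : AscHNN φ hφ) ∈
        ((Subgroup.zpowers (HNNExtension.of (a ^ lam) : AscHNN φ hφ) :
            Set (AscHNN φ hφ)) * (Gbar : Set (AscHNN φ hφ))) := by
    intro Gbar hNorm hFin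
    letI := hNorm
    let q : AscHNN φ hφ →* (AscHNN φ hφ ⧸ Gbar) := QuotientGroup.mk' Gbar
    have hconj : q HNNExtension.t * q (HNNExtension.of a) * (q HNNExtension.t)⁻¹
        = q (HNNExtension.of a) ^ lam := by
      rw [← map_inv, ← map_mul, ← map_mul, hrel, map_zpow]
    set m : ℕ := Nat.card (AscHNN φ hφ ⧸ Gbar) with hm
    have hm0 : m ≠ 0 := by
      have := hFin.index_ne_zero
      rwa [Subgroup.index, ← hm] at this
    have hTm : q HNNExtension.t ^ m = 1 := pow_card_eq_one'
    have hxx : q (HNNExtension.of a) ^ lam ^ m = q (HNNExtension.of a) := by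
      have := conj_pow_iter hconj m
      rw [hTm] at this
      simpa using this.symm
    have hmem : (q (HNNExtension.of a) ^ lam) ^ lam ^ (m - 1) = q (HNNExtension.of a) := by
      rw [← zpow_mul, ← pow_succ' lam (m - 1),
        Nat.sub_add_cancel (Nat.one_le_iff_ne_zero.2 hm0)]
      exact hxx
    set u : AscHNN φ hφ := (HNNExtension.of (a ^ lam) : AscHNN φ hφ) ^ (lam ^ (m - 1))
      with hu
    have hqu : q u = q (HNNExtension.of a) := by
      rw [hu, map_zpow, show (HNNExtension.of (a ^ lam) : AscHNN φ hφ)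
          = HNNExtension.of a ^ lam from map_zpow _ _ _, map_zpow]
      exact hmem
    refine Set.mem_mul.2 ⟨u, Subgroup.zpow_mem _ (Subgroup.mem_zpowers _) _,
      u⁻¹ * HNNExtension.of a, ?_, by group⟩
    have hq1 : q (u⁻¹ * HNNExtension.of a) = 1 := by
      rw [map_mul, map_inv, hqu, inv_mul_cancel]
    have : u⁻¹ * HNNExtension.of a ∈ q.ker := MonoidHom.mem_ker.mpr hq1
    rwa [show q.ker = Gbar from QuotientGroup.ker_mk' Gbar] at this
  refine ⟨part1, ?_⟩
  intro hsep
  have hnot : (HNNExtension.of a : AscHNN φ hφ) ∉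
      Subgroup.zpowers (HNNExtension.of (a ^ lam) : AscHNN φ hφ) := by
    rintro ⟨k, hk⟩
    simp only at hk
    rw [← map_zpow, ← zpow_mul] at hk
    have hak : a ^ (lam * k) = a :=
      HNNExtension.of_injective (φ := ascIso φ hφ) hk
    have h1 : a ^ (lam * k - 1) = 1 := by
      rw [zpow_sub, hak, zpow_one, mul_inv_cancel]
    have h2 : (lam * k - 1) • (Multiplicative.toAdd a) = 0 := by
      have := congrArg Multiplicative.toAdd h1
      simpa [toAdd_zpow] using this
    have h3 : lam * k - 1 = 0 := by
      by_contra h3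
      apply ha
      rcases smul_eq_zero.mp h2 with h | h
      · exact absurd h h3
      · have := congrArg Multiplicative.ofAdd h
        simpa using this
    have h4 : lam * k = 1 := by omega
    have : IsUnit lam := IsUnit.of_mul_eq_one _ h4
    rcases Int.isUnit_iff.mp this with h | h <;> rw [h] at hlam <;> norm_num at hlam
  obtain ⟨N, hN1, hN2, hN3⟩ := hsep _ _ hnot
  exact hN3 (part1 N hN1 hN2)
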